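/- Let b be a real number and let f be a differentiable real-valued function on [b,∞) such that f' is decreasing (antitone) on [b,∞) and f'(b) < 0. Then ∑_{n=0}^∞ e^{f(b+n)} ≤ e^{f(b)}/(1 − e^{f'(b)}). -/

import Mathlib

theorem stmt11 (b : ℝ) (f f' : ℝ → ℝ)
    (hderiv : ∀ x ∈ Set.Ici b, HasDerivAt f (f' x) x)
    (hanti : AntitoneOn f' (Set.Ici b))
    (hneg : f' b < 0) :
    ∑' n : ℕ, Real.exp (f (b + n)) ≤ Real.exp (f b) / (1 - Real.exp (f' b)) := by
  set r := Real.exp (f' b) with hr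
  have hr0 : 0 < r := Real.exp_pos _
  have hr1 : r < 1 := by
    rw [hr, Real.exp_lt_one_iff]
    exact hneg
  have hg : ∀ x ∈ Set.Ici b, HasDerivAt (fun x => f x - f' b * x) (f' x - f' b) x := by
    intro x hx
    have := (hderiv x hx).sub ((hasDerivAt_id x).const_mul (f' b))
    simp only [mul_one] at this
    exact this
  have hmono : AntitoneOn (fun x => f x - f' b * x) (Set.Ici b) := by
    apply antitoneOn_of_deriv_nonpos (convex_Ici b)
    · exact fun x hx => ((hg x hx).differentiableAt.continuousAt).continuousWithinAt
    · intro x hx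
      rw [interior_Ici] at hx
      exact ((hg x (Set.mem_Ici.mpr (le_of_lt hx))).differentiableAt).differentiableWithinAt
    · intro x hx
      rw [interior_Ici] at hx
      have hle : f' x ≤ f' b := hanti Set.self_mem_Ici (Set.mem_Ici.mpr (le_of_lt hx)) (le_of_lt hx)
      rw [(hg x (Set.mem_Ici.mpr (le_of_lt hx))).deriv]
      linarith
  have key : ∀ n : ℕ, f (b + n) ≤ f b + n * f' b := by
    intro n
    have hmem : (b + (n : ℝ)) ∈ Set.Ici b := by
      simp [le_add_of_nonneg_right, Nat.cast_nonneg]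
    have h1 := hmono Set.self_mem_Ici hmem (by simp)
    simp only at h1
    nlinarith [h1]
  have hbound : ∀ n : ℕ, Real.exp (f (b + n)) ≤ Real.exp (f b) * r ^ n := by
    intro n
    calc Real.exp (f (b + n)) ≤ Real.exp (f b + n * f' b) := Real.exp_le_exp.mpr (key n)
    _ = Real.exp (f b) * r ^ n := by rw [Real.exp_add, ← Real.exp_nat_mul]
  have hsumR : Summable (fun n : ℕ => Real.exp (f b) * r ^ n) :=
    (summable_geometric_of_lt_one hr0.le hr1).mul_left _
  have hsumL : Summable (fun n : ℕ => Real.exp (f (b + n))) :=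
    Summable.of_nonneg_of_le (fun n => (Real.exp_pos _).le) hbound hsumR
  calc ∑' n : ℕ, Real.exp (f (b + n)) ≤ ∑' n : ℕ, Real.exp (f b) * r ^ n :=
        Summable.tsum_le_tsum hbound hsumL hsumR
  _ = Real.exp (f b) * (1 - r)⁻¹ := by
        rw [tsum_mul_left, tsum_geometric_of_lt_one hr0.le hr1]
  _ = Real.exp (f b) / (1 - r) := by rw [div_eq_mul_inv]
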